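/- Consider a multi-hop channel with nodes 0, 1, …, n+1 (node 0 the source, nodes 1,…,n relays, node n+1 the destination), deadline T > 0, nondecreasing harvested-energy curves E_0, …, E_n : [0,T] → [0,∞), nondecreasing arrival-data curve B_s : [0,T] → [0,∞) and rate functions r_0, …, r_n. Set B*_{−1} = B_s and, for i = 0, …, n, let B*_i : [0,T] → [0,∞) be the transmitted data curve of some power policy feasible for (E_i, B*_{i−1}, r_i) such that: B*_i is convex; B*_i(T) ≥ ∫₀ᵀ r_i(p(s)) ds for every policy p feasible for (E_i, B*_{i−1}, r_i); and on every open interval on which B*_i is not affine, B*_i(t) ≥ ∫₀ᵗ r_i(p(s)) ds for every such feasible p and every t in that interval. Then the multi-hop maximum throughput D(T) (the supremum of ∫₀ᵀ r_n(p_n) over all multi-hop feasible tuples (p_0,…,p_n)) equals B*_n(T); i.e., the optimal multi-hop throughput is obtained by cascading point-to-point throughput maximization problems hop by hop. -/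

import Mathlib

open MeasureTheory Set Filter intervalIntegral

noncomputable section

/-- A rate function: continuous, strictly increasing, concave on `[0,∞)`,
vanishing at `0` and tending to `∞`. -/
def IsRateFunction (r : ℝ → ℝ) : Prop :=
  ContinuousOn r (Set.Ici 0) ∧ StrictMonoOn r (Set.Ici 0) ∧
    ConcaveOn ℝ (Set.Ici 0) r ∧ r 0 = 0 ∧
    Filter.Tendsto r Filter.atTop Filter.atTop

/-- Multi-hop feasibility of a tuple of power policies `p 0, …, p n` on `[0,T]`
for a chain with `n` relays: node `i` transmits with power policy `p i` over the
hop with rate function `r i`, using harvested energy `E i`; `Bs` is the arrival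
data curve at the source (node `0`). -/
def MultiHopFeasible (n : ℕ) (T : ℝ) (E : ℕ → ℝ → ℝ) (Bs : ℝ → ℝ)
    (r : ℕ → ℝ → ℝ) (p : ℕ → ℝ → ℝ) : Prop :=
  (∀ i ≤ n, IntervalIntegrable (p i) MeasureTheory.volume 0 T) ∧
  (∀ i ≤ n, IntervalIntegrable (fun s => r i (p i s)) MeasureTheory.volume 0 T) ∧
  (∀ i ≤ n, ∀ t ∈ Set.Icc (0:ℝ) T, 0 ≤ p i t) ∧
  (∀ i ≤ n, ∀ t ∈ Set.Icc (0:ℝ) T, (∫ s in (0:ℝ)..t, p i s) ≤ E i t) ∧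
  (∀ t ∈ Set.Icc (0:ℝ) T, (∫ s in (0:ℝ)..t, r 0 (p 0 s)) ≤ Bs t) ∧
  (∀ i : ℕ, i + 1 ≤ n → ∀ t ∈ Set.Icc (0:ℝ) T,
    (∫ s in (0:ℝ)..t, r (i+1) (p (i+1) s)) ≤ ∫ s in (0:ℝ)..t, r i (p i s))

/-- The multi-hop maximum throughput by deadline `T`. -/
def MultiHopThroughput (n : ℕ) (E : ℕ → ℝ → ℝ) (Bs : ℝ → ℝ)
    (r : ℕ → ℝ → ℝ) (T : ℝ) : ℝ :=
  sSup {x : ℝ | ∃ p : ℕ → ℝ → ℝ, MultiHopFeasible n T E Bs r p ∧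
    x = ∫ t in (0:ℝ)..T, r n (p n t)}

/-- An integrable power policy `p` is feasible for harvested energy `E`,
arrival data `B` and rate function `r` on `[0,T]`. -/
def Feasible (T : ℝ) (E B r p : ℝ → ℝ) : Prop :=
  IntervalIntegrable p MeasureTheory.volume 0 T ∧
  IntervalIntegrable (fun s => r (p s)) MeasureTheory.volume 0 T ∧
  (∀ t ∈ Set.Icc (0:ℝ) T, 0 ≤ p t) ∧
  (∀ t ∈ Set.Icc (0:ℝ) T, (∫ s in (0:ℝ)..t, p s) ≤ E t) ∧
  (∀ t ∈ Set.Icc (0:ℝ) T, (∫ s in (0:ℝ)..t, r (p s)) ≤ B t)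

open Topology

namespace MHaux

variable {r : ℝ → ℝ}

lemma rate_mono (hr : IsRateFunction r) {x y : ℝ} (hx : 0 ≤ x) (hxy : x ≤ y) :
    r x ≤ r y :=
  hr.2.1.monotoneOn (mem_Ici.2 hx) (mem_Ici.2 (hx.trans hxy)) hxy

lemma rate_nonneg (hr : IsRateFunction r) {x : ℝ} (hx : 0 ≤ x) : 0 ≤ r x := by
  have := rate_mono hr le_rfl hx
  rwa [hr.2.2.2.1] at this

lemma rate_subadd (hr : IsRateFunction r) {x y : ℝ} (hx : 0 ≤ x) (hy : 0 ≤ y) :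
    r (x + y) ≤ r x + r y := by
  rcases eq_or_lt_of_le (add_nonneg hx hy) with h0 | hpos
  · have hx0 : x = 0 := by linarith
    have hy0 : y = 0 := by linarith
    simp [hx0, hy0, hr.2.2.2.1]
  · set s := x + y with hs
    have hr0 : r 0 = 0 := hr.2.2.2.1
    have hcx : (x / s) • r s + (y / s) • r 0 ≤ r ((x / s) • s + (y / s) • (0:ℝ)) :=
      hr.2.2.1.2 (mem_Ici.2 (le_of_lt hpos)) (mem_Ici.2 le_rfl)
        (div_nonneg hx hpos.le) (div_nonneg hy hpos.le) (by field_simp; linarith)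
    have hcy : (y / s) • r s + (x / s) • r 0 ≤ r ((y / s) • s + (x / s) • (0:ℝ)) :=
      hr.2.2.1.2 (mem_Ici.2 (le_of_lt hpos)) (mem_Ici.2 le_rfl)
        (div_nonneg hy hpos.le) (div_nonneg hx hpos.le) (by field_simp [hs]; ring)
    have hxe : (x / s) • s + (y / s) • (0:ℝ) = x := by
      rw [smul_eq_mul, smul_eq_mul, mul_zero, add_zero, div_mul_cancel₀ x hpos.ne']
    have hye : (y / s) • s + (x / s) • (0:ℝ) = y := by
      rw [smul_eq_mul, smul_eq_mul, mul_zero, add_zero, div_mul_cancel₀ y hpos.ne']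
    rw [hxe] at hcx
    rw [hye] at hcy
    rw [hr0] at hcx hcy
    simp only [smul_eq_mul, mul_zero, add_zero] at hcx hcy
    have hsum : (x / s) * r s + (y / s) * r s = r s := by
      have hs0 : s ≠ 0 := hpos.ne'
      field_simp
      ring
    linarith

lemma rate_combo (hr : IsRateFunction r) {κ x y : ℝ} (hκ0 : 0 ≤ κ) (hκ1 : κ ≤ 1)
    (hx : 0 ≤ x) (hy : 0 ≤ y) :
    (1 - κ) * r x + κ * r y ≤ r ((1 - κ) * x + κ * y) := by
  have := hr.2.2.1.2 (mem_Ici.2 hx) (mem_Ici.2 hy) (by linarith : (0:ℝ) ≤ 1 - κ) hκ0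
    (by ring)
  simpa [smul_eq_mul] using this

/-- convex function below a line touching it at an interior point is the line -/
lemma convex_touch_line {T m : ℝ} (hT : 0 < T) {G : ℝ → ℝ}
    (hG : ConvexOn ℝ (Icc 0 T) G) (hG0 : G 0 = 0)
    (hle : ∀ t ∈ Icc (0:ℝ) T, G t ≤ m * t) {t1 : ℝ} (ht1 : t1 ∈ Ioo (0:ℝ) T)
    (htouch : G t1 = m * t1) :
    ∀ s ∈ Ioo (0:ℝ) T, G s = m * s := by
  intro s hs
  rcases lt_trichotomy s t1 with hlt | heq | hgt
  · -- s < t1 : use convexity between s and T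
    set θ : ℝ := (T - t1) / (T - s) with hθ
    have hTs : 0 < T - s := by linarith [hs.2]
    have hθ0 : 0 < θ := div_pos (by linarith [ht1.2]) hTs
    have hθ1 : θ ≤ 1 := by
      rw [div_le_one hTs]; linarith
    have hcomb' : θ * s + (1 - θ) * T = t1 := by
      rw [hθ]
      field_simp [hTs.ne']
      ring
    have hcx := hG.2 (mem_Icc.2 ⟨hs.1.le, hs.2.le⟩) (mem_Icc.2 ⟨hT.le, le_rfl⟩)
      hθ0.le (by linarith : (0:ℝ) ≤ 1 - θ) (by ring)
    simp only [smul_eq_mul] at hcx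
    rw [hcomb', htouch] at hcx
    have hGT : G T ≤ m * T := hle T (mem_Icc.2 ⟨hT.le, le_rfl⟩)
    have ht1eq : m * t1 = θ * (m * s) + (1 - θ) * (m * T) := by
      linear_combination m * hcomb'.symm
    have hstep : θ * (m * s) ≤ θ * G s := by nlinarith
    have hms : m * s ≤ G s := le_of_mul_le_mul_left hstep hθ0
    exact le_antisymm (hle s (mem_Icc.2 ⟨hs.1.le, hs.2.le⟩)) hms
  · rw [heq]; exact htouch
  · -- t1 < s : convexity between 0 and s
    have hs0 : 0 < s := hs.1
    set b : ℝ := t1 / s with hb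
    have hb0 : 0 < b := div_pos ht1.1 hs0
    have hb1 : b ≤ 1 := by rw [div_le_one hs0]; linarith
    have hcomb' : (1 - b) * (0:ℝ) + b * s = t1 := by
      rw [hb, mul_zero, zero_add, div_mul_cancel₀ t1 hs0.ne']
    have hcx := hG.2 (mem_Icc.2 ⟨le_rfl, hT.le⟩) (mem_Icc.2 ⟨hs0.le, hs.2.le⟩)
      (by linarith : (0:ℝ) ≤ 1 - b) hb0.le (by ring)
    simp only [smul_eq_mul] at hcx
    rw [hcomb', htouch, hG0] at hcx
    simp only [mul_zero, zero_add] at hcx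
    have ht1eq : m * t1 = b * (m * s) := by
      linear_combination m * hcomb'.symm
    rw [ht1eq] at hcx
    have hms : m * s ≤ G s := le_of_mul_le_mul_left (by linarith) hb0
    exact le_antisymm (hle s (mem_Icc.2 ⟨hs0.le, hs.2.le⟩)) hms

end MHaux

namespace MHaux

variable {T : ℝ}

/-- interval integrability transfers along pointwise equality on the closed interval -/
lemma II_congr {f g : ℝ → ℝ} {a b : ℝ} (hab : a ≤ b)
    (h : ∀ u ∈ Icc a b, f u = g u) (hf : IntervalIntegrable f volume a b) :
    IntervalIntegrable g volume a b := by
  rw [intervalIntegrable_iff_integrableOn_Ioo_of_le hab] at hf ⊢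
  exact (hf.congr_fun (fun u hu => h u (Ioo_subset_Icc_self hu)) measurableSet_Ioo)

lemma II_congr_Ioo {f g : ℝ → ℝ} {a b : ℝ} (hab : a ≤ b)
    (h : ∀ u ∈ Ioo a b, f u = g u) (hf : IntervalIntegrable f volume a b) :
    IntervalIntegrable g volume a b := by
  rw [intervalIntegrable_iff_integrableOn_Ioo_of_le hab] at hf ⊢
  exact (hf.congr_fun h measurableSet_Ioo)

lemma II_max0 {f : ℝ → ℝ} {a b : ℝ} (hf : IntervalIntegrable f volume a b) :
    IntervalIntegrable (fun s => max (f s) 0) volume a b := by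
  have h2 : IntervalIntegrable (fun s => (f s + |f s|) / 2) volume a b :=
    (hf.add hf.abs).div_const 2
  have : (fun s => max (f s) 0) = fun s => (f s + |f s|) / 2 := by
    funext s
    rcases le_total (f s) 0 with h | h
    · rw [max_eq_right h, abs_of_nonpos h]; ring
    · rw [max_eq_left h, abs_of_nonneg h]; ring
  exact this ▸ h2

end MHaux

namespace MHaux2
open MHaux

variable {T : ℝ}

/-- prefixes of nonneg integrable functions: monotone -/
lemma prefix_mono {f : ℝ → ℝ} (hT : 0 ≤ T)
    (hf : IntervalIntegrable f volume 0 T)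
    (hnn : ∀ u ∈ Icc (0:ℝ) T, 0 ≤ f u)
    {s t : ℝ} (hs : 0 ≤ s) (hst : s ≤ t) (ht : t ≤ T) :
    (∫ u in (0:ℝ)..s, f u) ≤ ∫ u in (0:ℝ)..t, f u := by
  have h1 : IntervalIntegrable f volume 0 s :=
    hf.mono_set (by rw [uIcc_of_le hs, uIcc_of_le hT]; exact Icc_subset_Icc le_rfl (hst.trans ht))
  have h2 : IntervalIntegrable f volume s t :=
    hf.mono_set (by rw [uIcc_of_le hst, uIcc_of_le hT]; exact Icc_subset_Icc hs ht)
  have hadd := integral_add_adjacent_intervals h1 h2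
  have hpos : 0 ≤ ∫ u in s..t, f u :=
    intervalIntegral.integral_nonneg hst (fun u hu => hnn u ⟨hs.trans hu.1, hu.2.trans ht⟩)
  linarith

lemma prefix_nonneg {f : ℝ → ℝ} (hT : 0 ≤ T)
    (hnn : ∀ u ∈ Icc (0:ℝ) T, 0 ≤ f u) {t : ℝ} (ht0 : 0 ≤ t) (ht : t ≤ T) :
    0 ≤ ∫ u in (0:ℝ)..t, f u :=
  intervalIntegral.integral_nonneg ht0 (fun u hu => hnn u ⟨hu.1, hu.2.trans ht⟩)

lemma prefix_contOn {f : ℝ → ℝ} (hT : 0 ≤ T)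
    (hf : IntervalIntegrable f volume 0 T) :
    ContinuousOn (fun t => ∫ u in (0:ℝ)..t, f u) (Icc 0 T) := by
  have := intervalIntegral.continuousOn_primitive_interval'
    (μ := volume) (b₁ := (0:ℝ)) (b₂ := T) (a := 0) hf (by rw [uIcc_of_le hT]; exact ⟨le_rfl, hT⟩)
  rwa [uIcc_of_le hT] at this

/-- limit from the left: if `A ≤ C` on `Ioo 0 t0` and `A` continuous, then `A t0 ≤ C`. -/
lemma cont_le_of_Ioo (hT : 0 < T) {A : ℝ → ℝ}
    (hA : ContinuousOn A (Icc 0 T)) {t0 : ℝ} (ht0 : t0 ∈ Ioc (0:ℝ) T) {C : ℝ}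
    (h : ∀ t ∈ Ioo (0:ℝ) t0, A t ≤ C) : A t0 ≤ C := by
  have hsub : Ioo (0:ℝ) t0 ⊆ Icc 0 T :=
    fun u hu => ⟨hu.1.le, hu.2.le.trans ht0.2⟩
  have hmem : t0 ∈ Icc (0:ℝ) T := ⟨ht0.1.le, ht0.2⟩
  have hcl : t0 ∈ closure (Ioo (0:ℝ) t0) := by
    rw [closure_Ioo (ne_of_lt ht0.1)]
    exact ⟨ht0.1.le, le_rfl⟩
  have hne : (𝓝[Ioo (0:ℝ) t0] t0).NeBot := mem_closure_iff_nhdsWithin_neBot.1 hcl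
  have htend : Tendsto A (𝓝[Ioo (0:ℝ) t0] t0) (𝓝 (A t0)) :=
    ((hA t0 hmem).mono hsub).tendsto
  exact le_of_tendsto htend (eventually_nhdsWithin_of_forall h)

/-- a continuous function agreeing with a continuous function on `Ioo 0 T`
agrees at the endpoints -/
lemma cont_eq_of_Ioo (hT : 0 < T) {A L : ℝ → ℝ}
    (hA : ContinuousOn A (Icc 0 T)) (hL : Continuous L)
    (h : ∀ t ∈ Ioo (0:ℝ) T, A t = L t) : A 0 = L 0 ∧ A T = L T := by
  constructor
  · have hcl : (0:ℝ) ∈ closure (Ioo (0:ℝ) T) := by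
      rw [closure_Ioo (ne_of_lt hT)]; exact ⟨le_rfl, hT.le⟩
    have hne : (𝓝[Ioo (0:ℝ) T] (0:ℝ)).NeBot := mem_closure_iff_nhdsWithin_neBot.1 hcl
    have h1 : Tendsto A (𝓝[Ioo (0:ℝ) T] 0) (𝓝 (A 0)) :=
      ((hA 0 ⟨le_rfl, hT.le⟩).mono Ioo_subset_Icc_self).tendsto
    have h2 : Tendsto A (𝓝[Ioo (0:ℝ) T] 0) (𝓝 (L 0)) := by
      refine Tendsto.congr' ?_ ((hL.tendsto 0).mono_left nhdsWithin_le_nhds)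
      exact eventually_nhdsWithin_of_forall (fun t ht => (h t ht).symm)
    exact tendsto_nhds_unique h1 h2
  · have hcl : T ∈ closure (Ioo (0:ℝ) T) := by
      rw [closure_Ioo (ne_of_lt hT)]; exact ⟨hT.le, le_rfl⟩
    have hne : (𝓝[Ioo (0:ℝ) T] T).NeBot := mem_closure_iff_nhdsWithin_neBot.1 hcl
    have h1 : Tendsto A (𝓝[Ioo (0:ℝ) T] T) (𝓝 (A T)) :=
      ((hA T ⟨hT.le, le_rfl⟩).mono Ioo_subset_Icc_self).tendsto
    have h2 : Tendsto A (𝓝[Ioo (0:ℝ) T] T) (𝓝 (L T)) := by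
      refine Tendsto.congr' ?_ ((hL.tendsto T).mono_left nhdsWithin_le_nhds)
      exact eventually_nhdsWithin_of_forall (fun t ht => (h t ht).symm)
    exact tendsto_nhds_unique h1 h2

end MHaux2

namespace MHaux3
open MHaux MHaux2

variable {T δ : ℝ} {G : ℝ → ℝ}

/-- the `δ`-delayed version of a policy `G` -/
noncomputable def shiftFn (G : ℝ → ℝ) (δ : ℝ) : ℝ → ℝ := fun s => if δ < s then G (s - δ) else 0

lemma shiftFn_nonneg (hGnn : ∀ s, 0 ≤ G s) (s : ℝ) : 0 ≤ shiftFn G δ s := by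
  unfold shiftFn; split <;> simp [hGnn]

lemma shiftFn_II (hδ : 0 < δ) (hδT : δ ≤ T) (hG : IntervalIntegrable G volume 0 T) :
    ∀ t ∈ Icc (0:ℝ) T, IntervalIntegrable (shiftFn G δ) volume 0 t := by
  intro t ht
  have hGs : IntervalIntegrable (fun s => G (s - δ)) volume δ (T + δ) := by
    have := hG.comp_sub_right δ
    rwa [zero_add] at this
  have h0δ : ∀ c ∈ Icc (0:ℝ) δ, IntervalIntegrable (shiftFn G δ) volume 0 c := by
    intro c hc
    refine II_congr hc.1 (f := fun _ => (0:ℝ)) ?_ intervalIntegrable_const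
    intro u hu
    simp [shiftFn, not_lt.2 (hu.2.trans hc.2)]
  rcases le_or_gt t δ with h | h
  · exact h0δ t ⟨ht.1, h⟩
  · refine (h0δ δ ⟨hδ.le, le_rfl⟩).trans ?_
    refine II_congr_Ioo h.le (f := fun s => G (s - δ)) ?_ ?_
    · intro u hu
      simp [shiftFn, hu.1]
    · exact hGs.mono_set (by
        rw [uIcc_of_le h.le, uIcc_of_le (by linarith : δ ≤ T + δ)]
        exact Icc_subset_Icc le_rfl (by linarith [ht.2]))

lemma shiftFn_prefix_zero (hδ : 0 < δ) {t : ℝ} (ht0 : 0 ≤ t) (ht : t ≤ δ) :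
    (∫ s in (0:ℝ)..t, shiftFn G δ s) = 0 := by
  have : EqOn (shiftFn G δ) (fun _ => (0:ℝ)) (Set.uIcc 0 t) := by
    intro u hu
    rw [uIcc_of_le ht0] at hu
    simp [shiftFn, not_lt.2 (hu.2.trans ht)]
  rw [intervalIntegral.integral_congr this]
  simp

lemma shiftFn_prefix (hδ : 0 < δ) (hδT : δ ≤ T) (hG : IntervalIntegrable G volume 0 T)
    {t : ℝ} (ht : t ∈ Icc (0:ℝ) T) (hδt : δ ≤ t) :
    (∫ s in (0:ℝ)..t, shiftFn G δ s) = ∫ s in (0:ℝ)..(t - δ), G s := by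
  have hII := shiftFn_II hδ hδT hG
  have h1 : IntervalIntegrable (shiftFn G δ) volume 0 δ := hII δ ⟨hδ.le, hδT⟩
  have h2 : IntervalIntegrable (shiftFn G δ) volume δ t := by
    have := (hII t ht).mono_set (c := δ) (d := t)
      (by rw [uIcc_of_le hδt, uIcc_of_le ht.1]; exact Icc_subset_Icc hδ.le le_rfl)
    exact this
  have hadd := intervalIntegral.integral_add_adjacent_intervals h1 h2
  rw [shiftFn_prefix_zero hδ hδ.le le_rfl, zero_add] at hadd
  rw [← hadd]
  have hstep : (∫ s in δ..t, shiftFn G δ s) = ∫ s in δ..t, G (s - δ) := by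
    rw [intervalIntegral.integral_of_le hδt, intervalIntegral.integral_of_le hδt]
    refine setIntegral_congr_fun measurableSet_Ioc ?_
    intro u hu
    simp [shiftFn, hu.1]
  rw [hstep, intervalIntegral.integral_comp_sub_right (fun s => G s) δ]
  simp

end MHaux3


namespace MHcore
open MHaux MHaux2 MHaux3

set_option maxHeartbeats 1000000

lemma mix_core {T m : ℝ} (hT : 0 < T)
    {Ek Bpk rk pstark Bstark pk : ℝ → ℝ}
    (hrk : IsRateFunction rk)
    (hEnn : ∀ t ∈ Icc (0:ℝ) T, 0 ≤ Ek t) (hEmono : MonotoneOn Ek (Icc 0 T))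
    (hps : Feasible T Ek Bpk rk pstark)
    (hBdef : ∀ t ∈ Icc (0:ℝ) T, Bstark t = ∫ s in (0:ℝ)..t, rk (pstark s))
    (hline : ∀ t ∈ Icc (0:ℝ) T, Bpk t = m * t) (hm : 0 ≤ m)
    (hpkI : IntervalIntegrable pk volume 0 T)
    (hrpkI : IntervalIntegrable (fun s => rk (pk s)) volume 0 T)
    (hpknn : ∀ t ∈ Icc (0:ℝ) T, 0 ≤ pk t)
    (hpkE : ∀ t ∈ Icc (0:ℝ) T, (∫ s in (0:ℝ)..t, pk s) ≤ Ek t)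
    {t0 δ ε : ℝ} (ht0 : t0 ∈ Ioc (0:ℝ) T) (hδ : δ ∈ Ioo (0:ℝ) t0) (hε : 0 < ε)
    (hslack : ∀ t ∈ Icc δ t0, Bstark t + ε ≤ m * t) :
    ∃ q : ℝ → ℝ, Feasible T Ek Bpk rk q ∧ ∃ κ : ℝ, 0 < κ ∧ κ ≤ 1 ∧
      (1 - κ) * Bstark t0 + κ * (∫ s in (0:ℝ)..(t0 - δ), rk (pk s))
        ≤ ∫ s in (0:ℝ)..t0, rk (q s) ∧
      (∫ s in (0:ℝ)..T, rk (q s)) = ∫ s in (0:ℝ)..t0, rk (q s) := by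
  obtain ⟨hpsI, hpsrI, hpsnn, hpsE, hpsB⟩ := hps
  have hδ0 : 0 < δ := hδ.1
  have hδt0 : δ < t0 := hδ.2
  have ht00 : 0 < t0 := ht0.1
  have ht0T : t0 ≤ T := ht0.2
  have hδT : δ < T := lt_of_lt_of_le hδt0 ht0T
  have hrk0 : rk 0 = 0 := hrk.2.2.2.1
  -- clamped versions
  set G₁ : ℝ → ℝ := fun u => max (pk u) 0 with hG₁def
  set G₂ : ℝ → ℝ := fun u => rk (max (pk u) 0) with hG₂def
  have hG₁nn : ∀ s, 0 ≤ G₁ s := fun s => le_max_right _ _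
  have hG₂nn : ∀ s, 0 ≤ G₂ s := fun s => rate_nonneg hrk (le_max_right _ _)
  have hG₁I : IntervalIntegrable G₁ volume 0 T := II_max0 hpkI
  have hG₂I : IntervalIntegrable G₂ volume 0 T := by
    refine II_congr hT.le (f := fun s => rk (pk s)) ?_ hrpkI
    intro u hu
    simp [hG₂def, max_eq_left (hpknn u hu)]
  have hG₁eq : ∀ u ∈ Icc (0:ℝ) T, G₁ u = pk u :=
    fun u hu => max_eq_left (hpknn u hu)
  have hG₂eq : ∀ u ∈ Icc (0:ℝ) T, G₂ u = rk (pk u) := by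
    intro u hu; simp [hG₂def, max_eq_left (hpknn u hu)]
  -- the delayed policy
  set pd : ℝ → ℝ := shiftFn G₁ δ with hpddef
  have hpdnn : ∀ s, 0 ≤ pd s := shiftFn_nonneg hG₁nn
  have hpdI : ∀ t ∈ Icc (0:ℝ) T, IntervalIntegrable pd volume 0 t :=
    shiftFn_II hδ0 hδT.le hG₁I
  have hrpd_eq : (fun s => rk (pd s)) = shiftFn G₂ δ := by
    funext s
    by_cases h : δ < s <;> simp [hpddef, shiftFn, h, hrk0, hG₂def, hG₁def]
  have hrpdI : ∀ t ∈ Icc (0:ℝ) T, IntervalIntegrable (fun s => rk (pd s)) volume 0 t := by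
    rw [hrpd_eq]; exact shiftFn_II hδ0 hδT.le hG₂I
  -- prefix identities for pd
  have hpd_prefix : ∀ t ∈ Icc (0:ℝ) T, δ ≤ t →
      (∫ s in (0:ℝ)..t, pd s) = ∫ s in (0:ℝ)..(t - δ), pk s := by
    intro t ht hδt
    rw [hpddef, shiftFn_prefix hδ0 hδT.le hG₁I ht hδt]
    refine intervalIntegral.integral_congr ?_
    intro u hu
    rw [uIcc_of_le (by linarith [ht.1] : (0:ℝ) ≤ t - δ)] at hu
    exact hG₁eq u ⟨hu.1, hu.2.trans (by linarith [ht.2])⟩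
  have hrpd_prefix : ∀ t ∈ Icc (0:ℝ) T, δ ≤ t →
      (∫ s in (0:ℝ)..t, rk (pd s)) = ∫ s in (0:ℝ)..(t - δ), rk (pk s) := by
    intro t ht hδt
    rw [hrpd_eq, shiftFn_prefix hδ0 hδT.le hG₂I ht hδt]
    refine intervalIntegral.integral_congr ?_
    intro u hu
    rw [uIcc_of_le (by linarith [ht.1] : (0:ℝ) ≤ t - δ)] at hu
    exact hG₂eq u ⟨hu.1, hu.2.trans (by linarith [ht.2])⟩
  -- choose κ by dominated convergence
  set Rk : ℝ → ℝ := fun x => rk (max x 0) with hRkdef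
  have hRkcont : Continuous Rk := by
    refine hrk.1.comp_continuous (continuous_id.max continuous_const) ?_
    intro x; exact mem_Ici.2 (le_max_right _ _)
  have hpd_asm : AEStronglyMeasurable pd (volume.restrict (Ioc (0:ℝ) T)) :=
    ((intervalIntegrable_iff_integrableOn_Ioc_of_le hT.le).1 (hpdI T ⟨hT.le, le_rfl⟩)).1
  have hbound_int : IntegrableOn (fun s => rk (pd s)) (Ioc (0:ℝ) T) volume :=
    (intervalIntegrable_iff_integrableOn_Ioc_of_le hT.le).1 (hrpdI T ⟨hT.le, le_rfl⟩)
  have hDCT : Tendsto (fun j : ℕ => ∫ s in Ioc (0:ℝ) T, rk ((((j:ℝ)+1)⁻¹) * pd s))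
      atTop (𝓝 0) := by
    have key := MeasureTheory.tendsto_integral_of_dominated_convergence
      (μ := volume.restrict (Ioc (0:ℝ) T))
      (F := fun (j : ℕ) s => rk ((((j:ℝ)+1)⁻¹) * pd s)) (f := fun _ => (0:ℝ))
      (fun s => rk (pd s)) ?_ hbound_int ?_ ?_
    · simpa using key
    · intro j
      refine (hRkcont.comp_aestronglyMeasurable
        (hpd_asm.const_mul ((((j:ℝ)+1)⁻¹)))).congr
        (Eventually.of_forall (fun s => ?_))
      have hmax : max ((((j:ℝ)+1)⁻¹) * pd s) 0 = (((j:ℝ)+1)⁻¹) * pd s :=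
        max_eq_left (mul_nonneg (by positivity) (hpdnn s))
      simp only [hRkdef, Function.comp_apply, hmax]
    · intro j
      refine Eventually.of_forall (fun s => ?_)
      have hj1 : (((j:ℝ)+1)⁻¹) ≤ 1 := by
        rw [inv_le_one_iff₀]; right; linarith [Nat.cast_nonneg (α := ℝ) j]
      have h1 : (((j:ℝ)+1)⁻¹) * pd s ≤ pd s :=
        mul_le_of_le_one_left (hpdnn s) hj1
      have h2 : 0 ≤ (((j:ℝ)+1)⁻¹) * pd s := mul_nonneg (by positivity) (hpdnn s)
      rw [Real.norm_eq_abs, abs_of_nonneg (rate_nonneg hrk h2)]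
      exact rate_mono hrk h2 h1
    · refine Eventually.of_forall (fun s => ?_)
      have h1 : Tendsto (fun j : ℕ => (((j:ℝ)+1)⁻¹) * pd s) atTop (𝓝 0) := by
        have := tendsto_one_div_add_atTop_nhds_zero_nat.mul_const (pd s)
        simpa [one_div] using this
      have h2 : Tendsto (fun j : ℕ => (((j:ℝ)+1)⁻¹) * pd s) atTop (𝓝[Ici 0] 0) := by
        rw [tendsto_nhdsWithin_iff]
        exact ⟨h1, Eventually.of_forall
          (fun j => mem_Ici.2 (mul_nonneg (by positivity) (hpdnn s)))⟩
      have h3 := ((hrk.1 0 (mem_Ici.2 le_rfl)).tendsto).comp h2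
      rw [hrk0] at h3
      exact h3
  obtain ⟨j, hj⟩ := (hDCT.eventually (gt_mem_nhds hε)).exists
  set κ : ℝ := (((j:ℝ)+1)⁻¹) with hκdef
  have hκ0 : 0 < κ := by positivity
  have hκ1 : κ ≤ 1 := by
    rw [hκdef, inv_le_one_iff₀]; right; linarith [Nat.cast_nonneg (α := ℝ) j]
  have hjκ : (∫ s in Ioc (0:ℝ) T, rk (κ * pd s)) < ε := hj
  -- the κ-scaled delayed rate policy
  set H : ℝ → ℝ := fun u => rk (κ * G₁ u) with hHdef
  have hH_eq : (fun s => rk (κ * pd s)) = shiftFn H δ := by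
    funext s
    by_cases h : δ < s <;> simp [hpddef, shiftFn, h, hrk0, hHdef]
  have hHnn : ∀ u, 0 ≤ H u := fun u => rate_nonneg hrk (mul_nonneg hκ0.le (hG₁nn u))
  have hHI : IntervalIntegrable H volume 0 T := by
    refine hG₂I.mono_fun' ?_ ?_
    · have hG₁asm : AEStronglyMeasurable G₁ (volume.restrict (Set.uIoc (0:ℝ) T)) :=
        hG₁I.def'.aestronglyMeasurable
      refine (hRkcont.comp_aestronglyMeasurable (hG₁asm.const_mul κ)).congr
        (Eventually.of_forall (fun u => ?_))
      simp [hRkdef, hHdef, Function.comp,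
        max_eq_left (mul_nonneg hκ0.le (hG₁nn u))]
    · refine Eventually.of_forall (fun u => ?_)
      show ‖H u‖ ≤ G₂ u
      rw [Real.norm_eq_abs, abs_of_nonneg (hHnn u)]
      exact rate_mono hrk (mul_nonneg hκ0.le (hG₁nn u))
        (mul_le_of_le_one_left (hG₁nn u) hκ1)
  have hI2I : ∀ t ∈ Icc (0:ℝ) T, IntervalIntegrable (fun s => rk (κ * pd s)) volume 0 t := by
    rw [hH_eq]; exact shiftFn_II hδ0 hδT.le hHI
  have hI2nn : ∀ s, 0 ≤ rk (κ * pd s) :=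
    fun s => rate_nonneg hrk (mul_nonneg hκ0.le (hpdnn s))
  have hI2T : (∫ s in (0:ℝ)..T, rk (κ * pd s)) < ε := by
    rw [intervalIntegral.integral_of_le hT.le]; exact hjκ
  have hI2le : ∀ t ∈ Icc (0:ℝ) T, (∫ s in (0:ℝ)..t, rk (κ * pd s)) ≤ ε := by
    intro t ht
    exact le_trans (prefix_mono hT.le (hI2I T ⟨hT.le, le_rfl⟩)
      (fun u _ => hI2nn u) ht.1 ht.2 le_rfl) hI2T.le
  have hI2zero : ∀ t ∈ Icc (0:ℝ) T, t ≤ δ → (∫ s in (0:ℝ)..t, rk (κ * pd s)) = 0 := by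
    intro t ht h
    rw [hH_eq]
    exact shiftFn_prefix_zero hδ0 ht.1 h
  -- clamped pstar
  set psp : ℝ → ℝ := fun s => max (pstark s) 0 with hpspdef
  have hpspI : IntervalIntegrable psp volume 0 T := II_max0 hpsI
  have hpsp_eq : ∀ u ∈ Icc (0:ℝ) T, psp u = pstark u := fun u hu => max_eq_left (hpsnn u hu)
  have hpspnn : ∀ s, 0 ≤ psp s := fun s => le_max_right _ _
  have hsub0t : ∀ t ∈ Icc (0:ℝ) T, Set.uIcc (0:ℝ) t ⊆ Set.uIcc (0:ℝ) T := by
    intro t ht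
    rw [uIcc_of_le ht.1, uIcc_of_le hT.le]
    exact Icc_subset_Icc le_rfl ht.2
  have hpspIt : ∀ t ∈ Icc (0:ℝ) T, IntervalIntegrable psp volume 0 t :=
    fun t ht => hpspI.mono_set (hsub0t t ht)
  have hrpsIt : ∀ t ∈ Icc (0:ℝ) T, IntervalIntegrable (fun s => rk (pstark s)) volume 0 t :=
    fun t ht => hpsrI.mono_set (hsub0t t ht)
  -- the mixed policy
  set q : ℝ → ℝ := fun s => if s ≤ t0 then (1-κ) * psp s + κ * pd s else 0 with hqdef
  have hqnn : ∀ s, 0 ≤ q s := by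
    intro s
    simp only [hqdef]
    by_cases h : s ≤ t0
    · simp only [if_pos h]
      exact add_nonneg (mul_nonneg (by linarith) (hpspnn s)) (mul_nonneg hκ0.le (hpdnn s))
    · simp only [if_neg h]
      exact le_rfl
  have hq_high : ∀ s, t0 < s → q s = 0 := by
    intro s hs; simp only [hqdef]; simp [not_le.2 hs]
  have hq_low : ∀ s, s ≤ t0 → q s = (1-κ) * psp s + κ * pd s := by
    intro s hs; simp only [hqdef]; simp [hs]
  have hmixI : ∀ t ∈ Icc (0:ℝ) T,
      IntervalIntegrable (fun s => (1-κ) * psp s + κ * pd s) volume 0 t :=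
    fun t ht => ((hpspIt t ht).const_mul _).add ((hpdI t ht).const_mul _)
  have hqIt0 : IntervalIntegrable q volume 0 t0 := by
    refine II_congr ht00.le (f := fun s => (1-κ) * psp s + κ * pd s) ?_
      (hmixI t0 ⟨ht00.le, ht0T⟩)
    intro u hu
    exact (hq_low u hu.2).symm
  have hqI : ∀ t ∈ Icc (0:ℝ) T, IntervalIntegrable q volume 0 t := by
    intro t ht
    rcases le_or_gt t t0 with h | h
    · refine II_congr ht.1 (f := fun s => (1-κ) * psp s + κ * pd s) ?_ (hmixI t ht)
      intro u hu
      exact (hq_low u (hu.2.trans h)).symm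
    · refine hqIt0.trans ?_
      refine II_congr_Ioo h.le (f := fun _ => (0:ℝ)) ?_ intervalIntegrable_const
      intro u hu
      exact (hq_high u hu.1).symm
  -- generic: integrals of functions vanishing after t0
  have vanish : ∀ F : ℝ → ℝ, (∀ s, t0 < s → F s = 0) →
      (∀ t ∈ Icc (0:ℝ) T, IntervalIntegrable F volume 0 t) →
      ∀ t ∈ Icc (0:ℝ) T, t0 ≤ t →
      (∫ s in (0:ℝ)..t, F s) = ∫ s in (0:ℝ)..t0, F s := by
    intro F hF hFI t ht h
    have h1 : IntervalIntegrable F volume t0 t :=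
      (hFI t ht).mono_set (by
        rw [uIcc_of_le h, uIcc_of_le ht.1]
        exact Icc_subset_Icc ht00.le le_rfl)
    have hadd := intervalIntegral.integral_add_adjacent_intervals
      (hFI t0 ⟨ht00.le, ht0T⟩) h1
    have hz : (∫ s in t0..t, F s) = 0 := by
      rw [intervalIntegral.integral_of_le h]
      rw [show (0:ℝ) = ∫ s in Ioc t0 t, (0:ℝ) by simp]
      exact setIntegral_congr_fun measurableSet_Ioc (fun s hs => hF s hs.1)
    rw [← hadd, hz, add_zero]
  -- energy prefix decomposition
  have hq_split : ∀ t ∈ Icc (0:ℝ) T, t ≤ t0 → (∫ s in (0:ℝ)..t, q s)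
      = (1-κ) * (∫ s in (0:ℝ)..t, pstark s) + κ * (∫ s in (0:ℝ)..t, pd s) := by
    intro t ht h
    have h1 : (∫ s in (0:ℝ)..t, q s) = ∫ s in (0:ℝ)..t, ((1-κ) * psp s + κ * pd s) := by
      refine intervalIntegral.integral_congr ?_
      intro u hu
      rw [uIcc_of_le ht.1] at hu
      exact hq_low u (hu.2.trans h)
    rw [h1, intervalIntegral.integral_add ((hpspIt t ht).const_mul _)
      ((hpdI t ht).const_mul _), intervalIntegral.integral_const_mul,
      intervalIntegral.integral_const_mul]
    have h2 : (∫ s in (0:ℝ)..t, psp s) = ∫ s in (0:ℝ)..t, pstark s := by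
      refine intervalIntegral.integral_congr ?_
      intro u hu
      rw [uIcc_of_le ht.1] at hu
      exact hpsp_eq u ⟨hu.1, hu.2.trans ht.2⟩
    rw [h2]
  -- rate-side integrability of q
  have hrqI : ∀ t ∈ Icc (0:ℝ) T, IntervalIntegrable (fun s => rk (q s)) volume 0 t := by
    intro t ht
    have hbnd : IntervalIntegrable (fun s => rk (pstark s) + rk (pd s)) volume 0 t :=
      (hrpsIt t ht).add (hrpdI t ht)
    refine hbnd.mono_fun' ?_ ?_
    · have hqasm : AEStronglyMeasurable q (volume.restrict (Set.uIoc (0:ℝ) t)) :=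
        (hqI t ht).def'.aestronglyMeasurable
      refine (hRkcont.comp_aestronglyMeasurable hqasm).congr
        (Eventually.of_forall (fun s => ?_))
      simp [hRkdef, Function.comp, max_eq_left (hqnn s)]
    · rw [uIoc_of_le ht.1]
      refine (ae_restrict_mem measurableSet_Ioc).mono (fun s hs => ?_)
      show ‖rk (q s)‖ ≤ rk (pstark s) + rk (pd s)
      have hsIcc : s ∈ Icc (0:ℝ) T := ⟨hs.1.le, hs.2.trans ht.2⟩
      rw [Real.norm_eq_abs, abs_of_nonneg (rate_nonneg hrk (hqnn s))]
      rcases le_or_gt s t0 with h | h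
      · rw [hq_low s h]
        refine le_trans (rate_subadd hrk (mul_nonneg (by linarith) (hpspnn s))
          (mul_nonneg hκ0.le (hpdnn s))) ?_
        have h1 : rk ((1-κ) * psp s) ≤ rk (pstark s) := by
          rw [← hpsp_eq s hsIcc]
          exact rate_mono hrk (mul_nonneg (by linarith) (hpspnn s))
            (mul_le_of_le_one_left (hpspnn s) (by linarith))
        have h2 : rk (κ * pd s) ≤ rk (pd s) :=
          rate_mono hrk (mul_nonneg hκ0.le (hpdnn s))
            (mul_le_of_le_one_left (hpdnn s) hκ1)
        linarith
      · rw [hq_high s h, hrk0]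
        exact add_nonneg (rate_nonneg hrk (hpsnn s hsIcc)) (rate_nonneg hrk (hpdnn s))
  -- upper bound on transmitted data
  have hrq_upper : ∀ t ∈ Icc (0:ℝ) T, t ≤ t0 → (∫ s in (0:ℝ)..t, rk (q s))
      ≤ Bstark t + (∫ s in (0:ℝ)..t, rk (κ * pd s)) := by
    intro t ht h
    have hmono : (∫ s in (0:ℝ)..t, rk (q s))
        ≤ ∫ s in (0:ℝ)..t, (rk (pstark s) + rk (κ * pd s)) := by
      refine intervalIntegral.integral_mono_on ht.1 (hrqI t ht)
        ((hrpsIt t ht).add (hI2I t ht)) ?_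
      intro u hu
      have huIcc : u ∈ Icc (0:ℝ) T := ⟨hu.1, hu.2.trans ht.2⟩
      rw [hq_low u (hu.2.trans h)]
      refine le_trans (rate_subadd hrk (mul_nonneg (by linarith) (hpspnn u))
        (mul_nonneg hκ0.le (hpdnn u))) ?_
      have h1 : rk ((1-κ) * psp u) ≤ rk (pstark u) := by
        rw [← hpsp_eq u huIcc]
        exact rate_mono hrk (mul_nonneg (by linarith) (hpspnn u))
          (mul_le_of_le_one_left (hpspnn u) (by linarith))
      linarith
    rw [intervalIntegral.integral_add (hrpsIt t ht) (hI2I t ht)] at hmono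
    rw [hBdef t ht]
    exact hmono
  -- lower bound at t0
  have hrq_lower : (1 - κ) * Bstark t0 + κ * (∫ s in (0:ℝ)..(t0 - δ), rk (pk s))
      ≤ ∫ s in (0:ℝ)..t0, rk (q s) := by
    have ht0Icc : t0 ∈ Icc (0:ℝ) T := ⟨ht00.le, ht0T⟩
    have hcomb : (∫ s in (0:ℝ)..t0, ((1-κ) * rk (pstark s) + κ * rk (pd s)))
        ≤ ∫ s in (0:ℝ)..t0, rk (q s) := by
      refine intervalIntegral.integral_mono_on ht00.le
        (((hrpsIt t0 ht0Icc).const_mul _).add ((hrpdI t0 ht0Icc).const_mul _))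
        (hrqI t0 ht0Icc) ?_
      intro u hu
      have huIcc : u ∈ Icc (0:ℝ) T := ⟨hu.1, hu.2.trans ht0T⟩
      rw [hq_low u hu.2, ← hpsp_eq u huIcc]
      exact rate_combo hrk hκ0.le hκ1 (hpspnn u) (hpdnn u)
    rw [intervalIntegral.integral_add ((hrpsIt t0 ht0Icc).const_mul _)
      ((hrpdI t0 ht0Icc).const_mul _), intervalIntegral.integral_const_mul,
      intervalIntegral.integral_const_mul, ← hBdef t0 ht0Icc,
      hrpd_prefix t0 ht0Icc hδt0.le] at hcomb
    exact hcomb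
  -- feasibility of q
  have hqfeas : Feasible T Ek Bpk rk q := by
    refine ⟨hqI T ⟨hT.le, le_rfl⟩, hrqI T ⟨hT.le, le_rfl⟩,
      fun t _ => hqnn t, ?_, ?_⟩
    · -- energy causality
      intro t ht
      rcases le_or_gt t t0 with h | h
      · rw [hq_split t ht h]
        have hA : (∫ s in (0:ℝ)..t, pstark s) ≤ Ek t := hpsE t ht
        have hA0 : 0 ≤ ∫ s in (0:ℝ)..t, pstark s :=
          prefix_nonneg hT.le hpsnn ht.1 ht.2
        have hE0 : 0 ≤ Ek t := hEnn t ht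
        rcases le_or_gt t δ with hd | hd
        · rw [hpddef, shiftFn_prefix_zero hδ0 ht.1 hd]
          nlinarith
        · have hB : (∫ s in (0:ℝ)..t, pd s) ≤ Ek t := by
            rw [hpd_prefix t ht hd.le]
            have htd : t - δ ∈ Icc (0:ℝ) T := ⟨by linarith, by linarith [ht.2]⟩
            exact le_trans (hpkE (t - δ) htd) (hEmono htd ht (by linarith))
          nlinarith
      · have heq := vanish q hq_high hqI t ht h.le
        rw [heq]
        have ht0Icc : t0 ∈ Icc (0:ℝ) T := ⟨ht00.le, ht0T⟩
        have h1 : (∫ s in (0:ℝ)..t0, q s) ≤ Ek t0 := by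
          rw [hq_split t0 ht0Icc le_rfl]
          have hA : (∫ s in (0:ℝ)..t0, pstark s) ≤ Ek t0 := hpsE t0 ht0Icc
          have hA0 : 0 ≤ ∫ s in (0:ℝ)..t0, pstark s :=
            prefix_nonneg hT.le hpsnn ht00.le ht0T
          have hE0 : 0 ≤ Ek t0 := hEnn t0 ht0Icc
          have hB : (∫ s in (0:ℝ)..t0, pd s) ≤ Ek t0 := by
            rw [hpd_prefix t0 ht0Icc hδt0.le]
            have htd : t0 - δ ∈ Icc (0:ℝ) T := ⟨by linarith, by linarith⟩
            exact le_trans (hpkE (t0 - δ) htd) (hEmono htd ht0Icc (by linarith))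
          nlinarith
        exact le_trans h1 (hEmono ⟨ht00.le, ht0T⟩ ht h.le)
    · -- data causality
      intro t ht
      rw [hline t ht]
      rcases le_or_gt t t0 with h | h
      · refine le_trans (hrq_upper t ht h) ?_
        rcases le_or_gt t δ with hd | hd
        · rw [hI2zero t ht hd, add_zero]
          have := hpsB t ht
          rw [← hBdef t ht, hline t ht] at this
          exact this
        · have h1 : (∫ s in (0:ℝ)..t, rk (κ * pd s)) ≤ ε := hI2le t ht
          have h2 := hslack t ⟨hd.le, h⟩
          linarith
      · rw [vanish (fun s => rk (q s)) (fun s hs => by show rk (q s) = 0; rw [hq_high s hs, hrk0])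
          hrqI t ht h.le]
        have ht0Icc : t0 ∈ Icc (0:ℝ) T := ⟨ht00.le, ht0T⟩
        have h1 : (∫ s in (0:ℝ)..t0, rk (q s)) ≤ m * t0 := by
          refine le_trans (hrq_upper t0 ht0Icc le_rfl) ?_
          have h2 := hslack t0 ⟨hδt0.le, le_rfl⟩
          have h3 : (∫ s in (0:ℝ)..t0, rk (κ * pd s)) ≤ ε := hI2le t0 ht0Icc
          linarith
        refine le_trans h1 (by nlinarith [h.le])
  refine ⟨q, hqfeas, κ, hκ0, hκ1, hrq_lower, ?_⟩
  exact vanish (fun s => rk (q s)) (fun s hs => by show rk (q s) = 0; rw [hq_high s hs, hrk0])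
    hrqI T ⟨hT.le, le_rfl⟩ ht0T



end MHcore


open MHaux MHaux2 MHaux3 MHcore

set_option maxHeartbeats 2000000 in
/-- Corollary 1: the optimal multi-hop throughput is obtained by cascading
point-to-point throughput maximization problems hop by hop: the source sends the
point-to-point optimal curve `B*₀` to relay 1, which treats it as its arrival
data curve and sends the point-to-point optimal curve `B*₁` to relay 2, and so
on; the multi-hop maximum throughput equals `B*ₙ(T)`. -/
theorem multihop_decomposition
    (n : ℕ) (T : ℝ) (hT : 0 < T)
    (E : ℕ → ℝ → ℝ) (Bs : ℝ → ℝ) (r : ℕ → ℝ → ℝ)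
    (hE_nonneg : ∀ i ≤ n, ∀ t ∈ Set.Icc (0:ℝ) T, 0 ≤ E i t)
    (hE_mono : ∀ i ≤ n, MonotoneOn (E i) (Set.Icc 0 T))
    (hBs_nonneg : ∀ t ∈ Set.Icc (0:ℝ) T, 0 ≤ Bs t)
    (hBs_mono : MonotoneOn Bs (Set.Icc 0 T))
    (hr : ∀ i ≤ n, IsRateFunction (r i))
    (pstar : ℕ → ℝ → ℝ)
    (Bstar : ℕ → ℝ → ℝ)
    (hBstar_def : ∀ i ≤ n, ∀ t ∈ Set.Icc (0:ℝ) T,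
      Bstar i t = ∫ s in (0:ℝ)..t, r i (pstar i s))
    -- the arrival data curve at node `i`: `B*_{-1} = B_s` and `B*_{i-1}` after
    (Bprev : ℕ → ℝ → ℝ)
    (hBprev_zero : Bprev 0 = Bs)
    (hBprev_succ : ∀ i : ℕ, Bprev (i + 1) = Bstar i)
    -- `pstar i` is feasible for `(E i, B*_{i-1}, r i)`
    (hpstar_feasible : ∀ i ≤ n, Feasible T (E i) (Bprev i) (r i) (pstar i))
    -- each `B*_i` is convex
    (hBstar_convex : ∀ i ≤ n, ConvexOn ℝ (Set.Icc 0 T) (Bstar i))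
    -- each `B*_i` maximizes the final transmitted data over its hop
    (hBstar_max : ∀ i ≤ n, ∀ p : ℝ → ℝ, Feasible T (E i) (Bprev i) (r i) p →
      (∫ s in (0:ℝ)..T, r i (p s)) ≤ Bstar i T)
    -- on every open subinterval of `[0,T]` on which `B*_i` is not affine,
    -- `B*_i` pointwise dominates every feasible transmitted data curve
    (hBstar_ptwise : ∀ i ≤ n, ∀ a b : ℝ, 0 ≤ a → a < b → b ≤ T →
      ¬ (∃ mc : ℝ × ℝ, ∀ t ∈ Set.Ioo a b, Bstar i t = mc.1 * t + mc.2) →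
      ∀ p : ℝ → ℝ, Feasible T (E i) (Bprev i) (r i) p →
        ∀ t ∈ Set.Ioo a b, (∫ s in (0:ℝ)..t, r i (p s)) ≤ Bstar i t) :
    MultiHopThroughput n E Bs r T = Bstar n T := by

  have hTmem : T ∈ Icc (0:ℝ) T := ⟨hT.le, le_rfl⟩
  have hB0 : ∀ k, k ≤ n → Bstar k 0 = 0 := by
    intro k hk
    rw [hBstar_def k hk 0 ⟨le_rfl, hT.le⟩, intervalIntegral.integral_same]
  have hBcont : ∀ k, k ≤ n → ContinuousOn (Bstar k) (Icc 0 T) := by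
    intro k hk
    exact (prefix_contOn hT.le (hpstar_feasible k hk).2.1).congr (hBstar_def k hk)
  have hBnn : ∀ k, k ≤ n → ∀ t ∈ Icc (0:ℝ) T, 0 ≤ Bstar k t := by
    intro k hk t ht
    rw [hBstar_def k hk t ht]
    refine prefix_nonneg hT.le ?_ ht.1 ht.2
    intro u hu
    exact rate_nonneg (hr k hk) ((hpstar_feasible k hk).2.2.1 u hu)
  have hBle : ∀ k, k ≤ n → ∀ t ∈ Icc (0:ℝ) T, Bstar k t ≤ Bprev k t := by
    intro k hk t ht
    rw [hBstar_def k hk t ht]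
    exact (hpstar_feasible k hk).2.2.2.2 t ht
  -- upper bound
  have hupper : ∀ p : ℕ → ℝ → ℝ, MultiHopFeasible n T E Bs r p →
      (∫ t in (0:ℝ)..T, r n (p n t)) ≤ Bstar n T := by
    intro p hmf
    obtain ⟨hIp, hIrp, hpnn, hpE, hp0B, hchain⟩ := hmf
    -- dichotomy for feasible policies
    have hdich : ∀ k, k ≤ n → ∀ q : ℝ → ℝ, Feasible T (E k) (Bprev k) (r k) q →
        ((∃ mc : ℝ × ℝ, ∀ t ∈ Ioo (0:ℝ) T, Bstar k t = mc.1 * t + mc.2) ∨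
          (∀ t ∈ Icc (0:ℝ) T, (∫ s in (0:ℝ)..t, r k (q s)) ≤ Bstar k t)) := by
      intro k hk q hq
      by_cases hA : ∃ mc : ℝ × ℝ, ∀ t ∈ Ioo (0:ℝ) T, Bstar k t = mc.1 * t + mc.2
      · exact Or.inl hA
      · refine Or.inr (fun t ht => ?_)
        rcases eq_or_lt_of_le ht.1 with h0 | h0
        · rw [← h0, intervalIntegral.integral_same, hB0 k hk]
        · rcases eq_or_lt_of_le ht.2 with hT' | hT'
          · rw [hT']
            exact hBstar_max k hk q hq
          · exact hBstar_ptwise k hk 0 T le_rfl hT le_rfl hA q hq t ⟨h0, hT'⟩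
    -- line representation of affine Bstar
    have hlinerep : ∀ k, k ≤ n →
        (∃ mc : ℝ × ℝ, ∀ t ∈ Ioo (0:ℝ) T, Bstar k t = mc.1 * t + mc.2) →
        ∀ t ∈ Icc (0:ℝ) T, Bstar k t = (Bstar k T / T) * t := by
      intro k hk hA
      obtain ⟨mc, hmc⟩ := hA
      have hL : Continuous (fun t : ℝ => mc.1 * t + mc.2) :=
        (continuous_const.mul continuous_id).add continuous_const
      obtain ⟨h0, hT'⟩ := cont_eq_of_Ioo hT (hBcont k hk) hL hmc
      rw [hB0 k hk] at h0
      have hc2 : mc.2 = 0 := by simpa using h0.symm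
      have hc1 : mc.1 = Bstar k T / T := by
        rw [hc2, add_zero] at hT'
        field_simp [hT']
        linarith
      intro t ht
      rcases eq_or_lt_of_le ht.1 with ht1 | ht1
      · rw [← ht1, hB0 k hk, mul_zero]
      · rcases eq_or_lt_of_le ht.2 with ht2 | ht2
        · rw [ht2]
          field_simp
        · rw [hmc t ⟨ht1, ht2⟩, hc1, hc2, add_zero]
    -- the induction
    have key : ∀ k, k ≤ n → ((∫ s in (0:ℝ)..T, r k (p k s)) ≤ Bstar k T ∧
        ((∃ mc : ℝ × ℝ, ∀ t ∈ Ioo (0:ℝ) T, Bstar k t = mc.1 * t + mc.2) ∨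
          (∀ t ∈ Icc (0:ℝ) T, (∫ s in (0:ℝ)..t, r k (p k s)) ≤ Bstar k t))) := by
      intro k
      induction k with
      | zero =>
        intro h0n
        have hfeas0 : Feasible T (E 0) (Bprev 0) (r 0) (p 0) :=
          ⟨hIp 0 h0n, hIrp 0 h0n, hpnn 0 h0n, hpE 0 h0n, by rw [hBprev_zero]; exact hp0B⟩
        exact ⟨hBstar_max 0 h0n _ hfeas0, hdich 0 h0n _ hfeas0⟩
      | succ i ih =>
        intro hsn
        have hin : i ≤ n := Nat.le_of_succ_le hsn
        obtain ⟨ihTOT, ihPA⟩ := ih hin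
        rcases ihPA with hAff | hPW
        · -- upstream affine
          set m := Bstar i T / T with hm_def
          have hline_i : ∀ t ∈ Icc (0:ℝ) T, Bstar i t = m * t := hlinerep i hin hAff
          have hm0 : 0 ≤ m := div_nonneg (hBnn i hin T hTmem) hT.le
          have hlineprev : ∀ t ∈ Icc (0:ℝ) T, Bprev (i+1) t = m * t := by
            intro t ht; rw [hBprev_succ]; exact hline_i t ht
          have hDiT : (∫ s in (0:ℝ)..T, r i (p i s)) ≤ m * T := by
            have h1 := hline_i T hTmem
            linarith [ihTOT]
          have hchainT := hchain i hsn T hTmem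
          have hDcont : ContinuousOn (fun t => ∫ s in (0:ℝ)..t, r (i+1) (p (i+1) s))
              (Icc 0 T) := prefix_contOn hT.le (hIrp (i+1) hsn)
          have hB1leline : ∀ t ∈ Icc (0:ℝ) T, Bstar (i+1) t ≤ m * t := by
            intro t ht
            have h1 := hBle (i+1) hsn t ht
            rw [hBprev_succ, hline_i t ht] at h1
            exact h1
          by_cases hA1 : ∃ mc : ℝ × ℝ, ∀ t ∈ Ioo (0:ℝ) T, Bstar (i+1) t = mc.1 * t + mc.2
          · -- downstream affine as well
            have hline1 : ∀ t ∈ Icc (0:ℝ) T, Bstar (i+1) t = (Bstar (i+1) T / T) * t :=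
              hlinerep (i+1) hsn hA1
            rcases lt_or_ge (Bstar (i+1) T) (m * T) with hlt | hge
            · -- strictly smaller slope: mixing argument
              have hTOT : (∫ s in (0:ℝ)..T, r (i+1) (p (i+1) s)) ≤ Bstar (i+1) T := by
                refine cont_le_of_Ioo hT hDcont ⟨hT, le_rfl⟩ ?_
                intro u hu
                have hδmem : T - u ∈ Ioo (0:ℝ) T := ⟨by linarith [hu.2], by linarith [hu.1]⟩
                have hεpos : 0 < (m * T - Bstar (i+1) T) / T * (T - u) :=
                  mul_pos (div_pos (by linarith) hT) hδmem.1
                have hslack : ∀ t ∈ Icc (T - u) T,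
                    Bstar (i+1) t + (m * T - Bstar (i+1) T) / T * (T - u) ≤ m * t := by
                  intro t htm
                  have htIcc : t ∈ Icc (0:ℝ) T := ⟨le_trans hδmem.1.le htm.1, htm.2⟩
                  rw [hline1 t htIcc]
                  have h1 : (m * T - Bstar (i+1) T) / T * (T - u)
                      ≤ (m * T - Bstar (i+1) T) / T * t :=
                    mul_le_mul_of_nonneg_left htm.1 (div_nonneg (by linarith) hT.le)
                  have h2 : (Bstar (i+1) T / T) * t + (m * T - Bstar (i+1) T) / T * t
                      = m * t := by
                    field_simp
                    ring
                  linarith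
                obtain ⟨q, hqf, κ, hκ0, hκ1, hlow, htail⟩ :=
                  mix_core hT (hr (i+1) hsn) (hE_nonneg (i+1) hsn) (hE_mono (i+1) hsn)
                    (hpstar_feasible (i+1) hsn) (hBstar_def (i+1) hsn) hlineprev hm0
                    (hIp (i+1) hsn) (hIrp (i+1) hsn) (hpnn (i+1) hsn) (hpE (i+1) hsn)
                    ⟨hT, le_rfl⟩ hδmem hεpos hslack
                have hmax := hBstar_max (i+1) hsn q hqf
                rw [htail] at hmax
                have hfin : (∫ s in (0:ℝ)..(T - (T - u)), r (i+1) (p (i+1) s))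
                    ≤ Bstar (i+1) T := by nlinarith [hlow, hmax, hκ0]
                simpa using hfin
              exact ⟨hTOT, Or.inl hA1⟩
            · exact ⟨le_trans hchainT (le_trans hDiT hge), Or.inl hA1⟩
          · -- downstream not affine: strict gap below the line
            have hgpos : ∀ t ∈ Ioo (0:ℝ) T, Bstar (i+1) t < m * t := by
              intro t htm
              have hle' := hB1leline t ⟨htm.1.le, htm.2.le⟩
              rcases eq_or_lt_of_le hle' with heq | h
              · exfalso
                apply hA1
                refine ⟨(m, 0), fun s hs => ?_⟩
                have := convex_touch_line hT (hBstar_convex (i+1) hsn) (hB0 (i+1) hsn)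
                  hB1leline htm heq s hs
                simpa using this
              · exact h
            have hint : ∀ t0 ∈ Ioo (0:ℝ) T,
                (∫ s in (0:ℝ)..t0, r (i+1) (p (i+1) s)) ≤ Bstar (i+1) t0 := by
              intro t0 ht0m
              refine cont_le_of_Ioo hT hDcont ⟨ht0m.1, ht0m.2.le⟩ ?_
              intro u hu
              have hδmem : t0 - u ∈ Ioo (0:ℝ) t0 := ⟨by linarith [hu.2], by linarith [hu.1]⟩
              have hsubIcc : Icc (t0 - u) t0 ⊆ Icc (0:ℝ) T :=
                Icc_subset_Icc hδmem.1.le ht0m.2.le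
              have hcontg : ContinuousOn (fun t => m * t - Bstar (i+1) t) (Icc (t0 - u) t0) :=
                ((continuous_const.mul continuous_id).continuousOn.sub
                  ((hBcont (i+1) hsn).mono hsubIcc))
              obtain ⟨tmin, htminmem, htminmin⟩ :=
                isCompact_Icc.exists_isMinOn ⟨t0 - u, ⟨le_rfl, hδmem.2.le⟩⟩ hcontg
              have htminIoo : tmin ∈ Ioo (0:ℝ) T :=
                ⟨lt_of_lt_of_le hδmem.1 htminmem.1, lt_of_le_of_lt htminmem.2 ht0m.2⟩
              have hγpos : 0 < m * tmin - Bstar (i+1) tmin :=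
                sub_pos.2 (hgpos tmin htminIoo)
              have hslack : ∀ t ∈ Icc (t0 - u) t0,
                  Bstar (i+1) t + (m * tmin - Bstar (i+1) tmin) ≤ m * t := by
                intro t htm
                have := isMinOn_iff.1 htminmin t htm
                linarith
              obtain ⟨q, hqf, κ, hκ0, hκ1, hlow, htail⟩ :=
                mix_core hT (hr (i+1) hsn) (hE_nonneg (i+1) hsn) (hE_mono (i+1) hsn)
                  (hpstar_feasible (i+1) hsn) (hBstar_def (i+1) hsn) hlineprev hm0
                  (hIp (i+1) hsn) (hIrp (i+1) hsn) (hpnn (i+1) hsn) (hpE (i+1) hsn)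
                  ⟨ht0m.1, ht0m.2.le⟩ hδmem hγpos hslack
              have hdom := hBstar_ptwise (i+1) hsn 0 T le_rfl hT le_rfl hA1 q hqf t0 ht0m
              have hfin : (∫ s in (0:ℝ)..(t0 - (t0 - u)), r (i+1) (p (i+1) s))
                  ≤ Bstar (i+1) t0 := by nlinarith [hlow, hdom, hκ0]
              simpa using hfin
            have hPW1 : ∀ t ∈ Icc (0:ℝ) T,
                (∫ s in (0:ℝ)..t, r (i+1) (p (i+1) s)) ≤ Bstar (i+1) t := by
              intro t ht
              rcases eq_or_lt_of_le ht.1 with h0 | h0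
              · rw [← h0, intervalIntegral.integral_same, hB0 (i+1) hsn]
              · rcases eq_or_lt_of_le ht.2 with hT' | hT'
                · rw [hT']
                  have hA2 : ContinuousOn
                      (fun t => (∫ s in (0:ℝ)..t, r (i+1) (p (i+1) s)) - Bstar (i+1) t)
                      (Icc 0 T) := hDcont.sub (hBcont (i+1) hsn)
                  have := cont_le_of_Ioo hT hA2 ⟨hT, le_rfl⟩ (C := 0)
                    (fun s hs => by linarith [hint s hs])
                  linarith
                · exact hint t ⟨h0, hT'⟩
            exact ⟨hPW1 T hTmem, Or.inr hPW1⟩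
        · -- upstream pointwise domination
          have hfeas : Feasible T (E (i+1)) (Bprev (i+1)) (r (i+1)) (p (i+1)) := by
            refine ⟨hIp _ hsn, hIrp _ hsn, hpnn _ hsn, hpE _ hsn, ?_⟩
            intro t ht
            rw [hBprev_succ]
            exact le_trans (hchain i hsn t ht) (hPW t ht)
          exact ⟨hBstar_max (i+1) hsn _ hfeas, hdich (i+1) hsn _ hfeas⟩
    exact (key n le_rfl).1
  -- the optimal cascade is multi-hop feasible
  have hmem : Bstar n T ∈ {x : ℝ | ∃ p : ℕ → ℝ → ℝ, MultiHopFeasible n T E Bs r p ∧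
      x = ∫ t in (0:ℝ)..T, r n (p n t)} := by
    refine ⟨pstar, ⟨fun i hi => (hpstar_feasible i hi).1,
      fun i hi => (hpstar_feasible i hi).2.1,
      fun i hi => (hpstar_feasible i hi).2.2.1,
      fun i hi => (hpstar_feasible i hi).2.2.2.1, ?_, ?_⟩, ?_⟩
    · intro t ht
      have := (hpstar_feasible 0 (Nat.zero_le n)).2.2.2.2 t ht
      rwa [hBprev_zero] at this
    · intro i hi t ht
      have h1 := (hpstar_feasible (i+1) hi).2.2.2.2 t ht
      rw [hBprev_succ, hBstar_def i (Nat.le_of_succ_le hi) t ht] at h1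
      exact h1
    · exact hBstar_def n le_rfl T hTmem
  have hbdd : ∀ x ∈ {x : ℝ | ∃ p : ℕ → ℝ → ℝ, MultiHopFeasible n T E Bs r p ∧
      x = ∫ t in (0:ℝ)..T, r n (p n t)}, x ≤ Bstar n T := by
    rintro x ⟨p, hp, rfl⟩
    exact hupper p hp
  unfold MultiHopThroughput
  exact le_antisymm (csSup_le ⟨Bstar n T, hmem⟩ hbdd)
    (le_csSup ⟨Bstar n T, hbdd⟩ hmem)
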